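/- If (S, N) is a quadratic normalisation for a monoid M, then the restriction N̄ of N to length-two words is idempotent, and M admits the presentation ⟨S | {s·t = N̄(s·t) : s, t ∈ S}⟩. -/

import Mathlib

namespace QN

variable {S A : Type*}

/-- A normalisation: a length-preserving map `N` on words over `S` fixing
length-one words and satisfying `N (u ++ N w ++ v) = N (u ++ w ++ v)`. -/
structure Normalisation (S : Type*) where
  N : List S → List S
  length_eq : ∀ w : List S, (N w).length = w.length
  single : ∀ s : S, N [s] = [s]
  mid : ∀ u v w : List S, N (u ++ N w ++ v) = N (u ++ w ++ v)

/-- Extract the two entries of a length-two word (with a default fallback). -/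
def pairOf : List S → S → S → S × S
  | [x, y], _, _ => (x, y)
  | _, s, t => (s, t)

/-- The restriction `N̄` of `N` to length-two words, as a map on pairs. -/
def nbar (N : List S → List S) (s t : S) : S × S :=
  pairOf (N [s, t]) s t

/-- Apply `f` to the length-two factor at (1-indexed) position `i`;
out-of-range positions act as the identity. -/
def applyAt (f : S → S → S × S) : ℕ → List S → List S
  | 1, a :: b :: l => (f a b).1 :: (f a b).2 :: l
  | n + 2, a :: l => a :: applyAt f (n + 1) l
  | _, l => l

/-- `φ_u`: apply `φ` at the successive positions of `u`, leftmost entry of `u` first. -/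
def applySeq (f : S → S → S × S) (u : List ℕ) (w : List S) : List S :=
  u.foldl (fun w i => applyAt f i w) w

/-- A word is `N`-normal iff all its length-two factors are `N`-normal. -/
def LocallyNormal (N : List S → List S) : Prop :=
  ∀ w : List S, N w = w ↔ ∀ u v : List S, ∀ s t : S, w = u ++ s :: t :: v → N [s, t] = [s, t]

/-- Every word is normalised by finitely many applications of `N̄` at positions. -/
def NbarGenerated (N : List S → List S) : Prop :=
  ∀ w : List S, ∃ u : List ℕ, N w = applySeq (nbar N) u w

/-- A normalisation map is quadratic if it satisfies the two locality conditions. -/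
def Quadratic (N : List S → List S) : Prop :=
  LocallyNormal N ∧ NbarGenerated N

/-- `e` is `N`-neutral: `N (w·e) = N (e·w) = N w · e`. -/
def Neutral (N : List S → List S) (e : S) : Prop :=
  ∀ w : List S, N (w ++ [e]) = N w ++ [e] ∧ N (e :: w) = N w ++ [e]

/-- The alternating sequence of length `m` starting with `k ∈ {1,2}`. -/
def altFrom : ℕ → ℕ → List ℕ
  | _, 0 => []
  | k, n + 1 => k :: altFrom (3 - k) n

/-- `(S, N)` is of left-class `c`: `N = N̄_{α_c}` on length-three words. -/
def LeftClass (N : List S → List S) (c : ℕ) : Prop :=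
  ∀ w : List S, w.length = 3 → N w = applySeq (nbar N) (altFrom 1 c) w

/-- `(S, N)` is of right-class `c`: `N = N̄_{ᾱ_c}` on length-three words. -/
def RightClass (N : List S → List S) (c : ℕ) : Prop :=
  ∀ w : List S, w.length = 3 → N w = applySeq (nbar N) (altFrom 2 c) w

/-- The domino rule is valid for `f`. -/
def DominoRule (f : S → S → S × S) : Prop :=
  ∀ s₁ s₂ s₁' s₂' t₀ t₁ t₂ : S,
    f t₀ s₁ = (s₁', t₁) → f t₁ s₂ = (s₂', t₂) →
    f s₁ s₂ = (s₁, s₂) → f s₁' s₂' = (s₁', s₂')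

/-- The sequences `δ_p`: `δ₁ = ε` and `δ_p = sh(δ_{p-1})·1·2·⋯·(p-1)`. -/
def delta : ℕ → List ℕ
  | 0 => []
  | 1 => []
  | p + 2 => (delta (p + 1)).map (· + 1) ++ List.range' 1 (p + 1)

/-- Apply `N` to the length-`k` factor beginning at (1-indexed) position `i`. -/
def applyFactorAt (N : List S → List S) (k : ℕ) : ℕ → List S → List S
  | 0, w => w
  | i + 1, w => w.take i ++ N ((w.drop i).take k) ++ w.drop (i + k)

/-- Apply `N` to length-`k` factors at the successive positions of `u`. -/
def applyFactorSeq (N : List S → List S) (k : ℕ) (u : List ℕ) (w : List S) : List S :=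
  u.foldl (fun w i => applyFactorAt N k i w) w

/-- One-step rewriting relation of a rewriting system `R`. -/
def RStep (R : List A → List A → Prop) (x y : List A) : Prop :=
  ∃ u v w w', R w w' ∧ x = u ++ w ++ v ∧ y = u ++ w' ++ v

/-- A rewriting system is terminating if it admits no infinite rewriting sequence. -/
def Terminating (R : List A → List A → Prop) : Prop :=
  ¬ ∃ f : ℕ → List A, ∀ n, RStep R (f n) (f (n + 1))

/-- Confluence of a rewriting system. -/
def Confluent (R : List A → List A → Prop) : Prop :=
  ∀ w w₁ w₂ : List A, Relation.ReflTransGen (RStep R) w w₁ →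
    Relation.ReflTransGen (RStep R) w w₂ →
    ∃ w', Relation.ReflTransGen (RStep R) w₁ w' ∧ Relation.ReflTransGen (RStep R) w₂ w'

/-- A word is `R`-normal if no rule of `R` applies to any of its factors. -/
def RNormal (R : List A → List A → Prop) (w : List A) : Prop :=
  ¬ ∃ w', RStep R w w'

/-- Every word rewrites to some `R`-normal word. -/
def Normalising (R : List A → List A → Prop) : Prop :=
  ∀ w : List A, ∃ w', Relation.ReflTransGen (RStep R) w w' ∧ RNormal R w'

/-- A rewriting system is quadratic if all its rules relate length-two words. -/
def QuadraticRS (R : List A → List A → Prop) : Prop :=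
  ∀ w w', R w w' → w.length = 2 ∧ w'.length = 2

/-- A rewriting system is reduced. -/
def ReducedRS (R : List A → List A → Prop) : Prop :=
  ∀ w w', R w w' → RNormal R w' ∧ RNormal (fun a b => R a b ∧ ¬(a = w ∧ b = w')) w

/-- The rewriting system associated with a quadratic normalisation:
one rule `s·t → N̄(s·t)` for each non-`N`-normal length-two word. -/
def rules (N : List S → List S) : List S → List S → Prop :=
  fun w w' => ∃ s t : S, w = [s, t] ∧ w' = N [s, t] ∧ w' ≠ w

/-- `π_e`: delete all occurrences of `e`, landing in words over `S∖{e}`. -/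
noncomputable def pie (e : S) (w : List S) : List {s : S // s ≠ e} :=
  w.filterMap fun s => @dite _ (s = e) (Classical.dec _) (fun _ => none) (fun h => some ⟨s, h⟩)

/-- The rewriting system `R_e` over `S∖{e}`. -/
def rulesE (N : List S → List S) (e : S) :
    List {s : S // s ≠ e} → List {s : S // s ≠ e} → Prop :=
  fun w w' => ∃ s t : {s : S // s ≠ e},
    w = [s, t] ∧ N [s.1, t.1] ≠ [s.1, t.1] ∧ w' = pie e (N [s.1, t.1])

/-- `M` admits the monoid presentation `⟨S ∣ r⟩`. -/
def PresentedBy (M : Type*) [Monoid M] (S : Type*) (r : List S → List S → Prop) : Prop :=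
  Nonempty ((conGen fun a b : FreeMonoid S => r a.toList b.toList).Quotient ≃* M)

/-- Left-divisibility in a monoid. -/
def LeftDvd {M : Type*} [Monoid M] (f g : M) : Prop :=
  ∃ g', f * g' = g

/-- The pair `s₁, s₂` is `S`-normal (greedy). -/
def SNormalPair {M : Type*} [Monoid M] (S : Set M) (s₁ s₂ : M) : Prop :=
  ∀ s ∈ S, ∀ f : M, LeftDvd s (f * s₁ * s₂) → LeftDvd s (f * s₁)

/-- A word over `S` is `S`-normal if all its adjacent pairs are. -/
def SNormalWord {M : Type*} [Monoid M] (S : Set M) (w : List S) : Prop :=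
  ∀ u v : List S, ∀ a b : S, w = u ++ a :: b :: v → SNormalPair S (a : M) (b : M)

end QN

open QN

namespace QNProof
open QN

variable {S : Type*}

abbrev crel (ns : Normalisation S) : Con (FreeMonoid S) :=
  conGen fun a b : FreeMonoid S => ∃ s t : S, a.toList = [s, t] ∧ b.toList = ns.N [s, t]

lemma relAt (ns : Normalisation S) : ∀ (i : ℕ) (w : List S),
    crel ns (FreeMonoid.ofList w) (FreeMonoid.ofList (applyAt (nbar ns.N) i w)) := by
  intro i
  induction i using Nat.strong_induction_on with
  | _ i ih =>
  intro w
  match i, w with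
  | 0, w => exact (crel ns).refl _
  | 1, [] => exact (crel ns).refl _
  | 1, [a] => exact (crel ns).refl _
  | 1, a :: b :: l =>
    obtain ⟨x, y, hxy⟩ : ∃ x y, ns.N [a, b] = [x, y] := by
      have h := ns.length_eq [a, b]
      rcases hw : ns.N [a, b] with _ | ⟨x, _ | ⟨y, _ | _⟩⟩ <;> simp [hw] at h ⊢
    have h1 : applyAt (nbar ns.N) 1 (a :: b :: l) = ns.N [a, b] ++ l := by
      simp [applyAt, nbar, hxy, pairOf]
    rw [h1]
    have hstep : crel ns (FreeMonoid.ofList [a, b]) (FreeMonoid.ofList (ns.N [a, b])) :=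
      ConGen.Rel.of _ _ ⟨a, b, by simp, by simp⟩
    have hmul : crel ns (FreeMonoid.ofList [a, b] * FreeMonoid.ofList l)
        (FreeMonoid.ofList (ns.N [a, b]) * FreeMonoid.ofList l) :=
      (crel ns).mul hstep ((crel ns).refl _)
    simpa [← FreeMonoid.ofList_append, mul_assoc] using hmul
  | (n + 2), [] => exact (crel ns).refl _
  | (n + 2), a :: l =>
    have hrec := ih (n + 1) (by omega) l
    have hmul : crel ns (FreeMonoid.ofList [a] * FreeMonoid.ofList l)
        (FreeMonoid.ofList [a] * FreeMonoid.ofList (applyAt (nbar ns.N) (n + 1) l)) :=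
      (crel ns).mul ((crel ns).refl _) hrec
    have h2 : applyAt (nbar ns.N) (n + 2) (a :: l) = a :: applyAt (nbar ns.N) (n + 1) l := rfl
    rw [h2]
    simpa [← FreeMonoid.ofList_append] using hmul

lemma relSeq (ns : Normalisation S) : ∀ (u : List ℕ) (w : List S),
    crel ns (FreeMonoid.ofList w) (FreeMonoid.ofList (applySeq (nbar ns.N) u w)) := by
  intro u
  induction u with
  | nil => intro w; exact (crel ns).refl _
  | cons i u ih =>
    intro w
    have h : applySeq (nbar ns.N) (i :: u) w
        = applySeq (nbar ns.N) u (applyAt (nbar ns.N) i w) := rfl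
    rw [h]
    exact (relAt ns i w).trans (ih _)

lemma con_eq (ns : Normalisation S) (hq : Quadratic ns.N) :
    (conGen fun a b : FreeMonoid S => (fun w w' => w' = ns.N w) a.toList b.toList)
      = (conGen fun a b : FreeMonoid S =>
          (fun w w' => ∃ s t : S, w = [s, t] ∧ w' = ns.N [s, t]) a.toList b.toList) := by
  apply le_antisymm
  · apply Con.conGen_le.2
    intro a b h
    simp only at h
    obtain ⟨u, hu⟩ := hq.2 a.toList
    have hr := relSeq ns u a.toList
    rw [← hu, ← h] at hr
    simpa [FreeMonoid.ofList_toList] using hr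
  · apply Con.conGen_le.2
    intro a b h
    obtain ⟨s, t, ha, hb⟩ := h
    exact ConGen.Rel.of _ _ (show b.toList = ns.N a.toList by rw [ha]; exact hb)

end QNProof

/-- If `(S, N)` is a quadratic normalisation for a monoid `M`, then `N̄` is
idempotent and `M` admits the presentation `⟨S ∣ s·t = N̄(s·t)⟩`. -/
theorem statement2 {S M : Type*} [Monoid M] (ns : Normalisation S)
    (hq : Quadratic ns.N)
    (hpres : PresentedBy M S fun w w' => w' = ns.N w) :
    (∀ s t : S, ns.N (ns.N [s, t]) = ns.N [s, t]) ∧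
    PresentedBy M S (fun w w' => ∃ s t : S, w = [s, t] ∧ w' = ns.N [s, t]) := by
  constructor
  · intro s t
    simpa using ns.mid [] [] [s, t]
  · unfold PresentedBy at hpres ⊢
    rw [← QNProof.con_eq ns hq]
    exact hpres
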